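/- arXiv:2407.08881 — 2 statements merged into one kernel-verified Lean document; each statement's English description precedes it below -/
import Mathlib

section
/- Fix a prime p and an integer α ≥ 1. For s ≥ α let T(s) denote the sum, over all divisors d of p^s such that gcd(d, p^s/d) divides p^{s−α}, of φ(gcd(d, p^s/d)), and define the rational numbers h(0) = 1 and h(r) = T(r+α)/2 for r ≥ 1. Then: h(1) − 2 = (p−3)/2 if α = 1, and h(1) − 2 = p − 2 if α ≥ 2. Moreover, for every r ≥ 2, the quantity h(r) − 2h(r−1) + h(r−2) equals: 0 if r ≥ α+1 and r+α is odd; (p^{(r+α)/2} − 2p^{(r+α)/2 − 1} + p^{(r+α)/2 − 2})/2 if r ≥ α+2 and r+α is even; (p^r − 3p^{r−1} + 2p^{r−2})/2 if r = α; and p^r − 2p^{r−1} + p^{r−2} if r < α. -/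
/-- For `s ≥ α`, `T(s)` is the sum over divisors `d` of `p^s` with
`gcd(d, p^s/d) ∣ p^{s-α}` of `φ(gcd(d, p^s/d))`. -/
def T (p α s : ℕ) : ℕ :=
  ∑ d ∈ (p ^ s).divisors.filter (fun d => Nat.gcd d (p ^ s / d) ∣ p ^ (s - α)),
    (Nat.gcd d (p ^ s / d)).totient

/-- `h(0) = 1` and `h(r) = T(r+α)/2` for `r ≥ 1`. -/
def h (p α : ℕ) : ℕ → ℚ := fun r => if r = 0 then 1 else (T p α (r + α) : ℚ) / 2

lemma gcd_pow_pow (p i j : ℕ) : Nat.gcd (p ^ i) (p ^ j) = p ^ (min i j) := by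
  rcases le_total i j with h | h
  · rw [min_eq_left h]; exact Nat.gcd_eq_left (pow_dvd_pow p h)
  · rw [min_eq_right h]; exact Nat.gcd_eq_right (pow_dvd_pow p h)

lemma sum_totient_pow {p : ℕ} (hp : p.Prime) (n : ℕ) :
    ∑ i ∈ Finset.range (n + 1), (p ^ i).totient = p ^ n := by
  rw [← Nat.sum_divisors_prime_pow hp (f := Nat.totient), Nat.sum_totient]

lemma T_eq {p : ℕ} (hp : p.Prime) {α s : ℕ} (hα : 1 ≤ α) (hs : α ≤ s) :
    T p α s = if s < 2 * α then 2 * p ^ (s - α) else p ^ (s / 2) + p ^ ((s - 1) / 2) := by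
  have key : T p α s = ∑ i ∈ Finset.range (s + 1),
      (if min i (s - i) ≤ s - α then (p ^ (min i (s - i))).totient else 0) := by
    rw [T, Finset.sum_filter, Nat.sum_divisors_prime_pow hp]
    refine Finset.sum_congr rfl fun i hi => ?_
    rw [Finset.mem_range] at hi
    rw [Nat.pow_div (by omega) hp.pos, gcd_pow_pow]
    simp only [Nat.pow_dvd_pow_iff_le_right hp.one_lt]
  rw [key, Finset.range_eq_Ico]
  split_ifs with hc
  · set t := s - α with ht
    have h1 : 0 ≤ t + 1 := by omega
    have h2 : t + 1 ≤ s - t := by omega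
    have h3 : s - t ≤ s + 1 := by omega
    rw [← Finset.sum_Ico_consecutive _ h1 (le_trans h2 h3),
      ← Finset.sum_Ico_consecutive _ h2 h3]
    have e1 : ∑ i ∈ Finset.Ico 0 (t + 1),
        (if min i (s - i) ≤ t then (p ^ (min i (s - i))).totient else 0) = p ^ t := by
      rw [← Finset.range_eq_Ico, ← sum_totient_pow hp t]
      refine Finset.sum_congr rfl fun i hi => ?_
      rw [Finset.mem_range] at hi
      rw [if_pos (by omega), min_eq_left (by omega)]
    have e2 : ∑ i ∈ Finset.Ico (t + 1) (s - t),
        (if min i (s - i) ≤ t then (p ^ (min i (s - i))).totient else 0) = 0 := by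
      refine Finset.sum_eq_zero fun i hi => ?_
      rw [Finset.mem_Ico] at hi
      rw [if_neg (by omega)]
    have e3 : ∑ i ∈ Finset.Ico (s - t) (s + 1),
        (if min i (s - i) ≤ t then (p ^ (min i (s - i))).totient else 0) = p ^ t := by
      have : ∀ i ∈ Finset.Ico (s - t) (s + 1),
          (if min i (s - i) ≤ t then (p ^ (min i (s - i))).totient else 0)
            = (p ^ (s - i)).totient := by
        intro i hi
        rw [Finset.mem_Ico] at hi
        rw [if_pos (by omega), min_eq_right (by omega)]
      rw [Finset.sum_congr rfl this,
        Finset.sum_Ico_reflect (fun j => (p ^ j).totient) (s - t) (le_refl (s + 1))]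
      rw [show s + 1 - (s + 1) = 0 from by omega, show s + 1 - (s - t) = t + 1 from by omega,
        ← Finset.range_eq_Ico, sum_totient_pow hp]
    rw [e1, e2, e3]; omega
  · have hall : ∀ i ∈ Finset.Ico 0 (s + 1),
        (if min i (s - i) ≤ s - α then (p ^ (min i (s - i))).totient else 0)
          = (p ^ (min i (s - i))).totient := by
      intro i hi
      rw [Finset.mem_Ico] at hi
      rw [if_pos (by omega)]
    rw [Finset.sum_congr rfl hall]
    have h2 : s / 2 + 1 ≤ s + 1 := by omega
    rw [← Finset.sum_Ico_consecutive _ (Nat.zero_le (s / 2 + 1)) h2]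
    have e1 : ∑ i ∈ Finset.Ico 0 (s / 2 + 1), (p ^ (min i (s - i))).totient
        = p ^ (s / 2) := by
      rw [← Finset.range_eq_Ico, ← sum_totient_pow hp (s / 2)]
      refine Finset.sum_congr rfl fun i hi => ?_
      rw [Finset.mem_range] at hi
      rw [min_eq_left (by omega)]
    have e2 : ∑ i ∈ Finset.Ico (s / 2 + 1) (s + 1), (p ^ (min i (s - i))).totient
        = p ^ ((s - 1) / 2) := by
      have : ∀ i ∈ Finset.Ico (s / 2 + 1) (s + 1),
          (p ^ (min i (s - i))).totient = (p ^ (s - i)).totient := by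
        intro i hi
        rw [Finset.mem_Ico] at hi
        rw [min_eq_right (by omega)]
      rw [Finset.sum_congr rfl this,
        Finset.sum_Ico_reflect (fun j => (p ^ j).totient) (s / 2 + 1) (le_refl (s + 1))]
      rw [show s + 1 - (s + 1) = 0 from by omega,
        show s + 1 - (s / 2 + 1) = (s - 1) / 2 + 1 from by omega,
        ← Finset.range_eq_Ico, sum_totient_pow hp]
    rw [e1, e2]


lemma h_small {p α : ℕ} (hp : p.Prime) (hα : 1 ≤ α) {r : ℕ} (hr : r ≤ α - 1) :
    h p α r = (p : ℚ) ^ r := by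
  rcases Nat.eq_zero_or_pos r with h0 | h0
  · simp [h, h0]
  · rw [h]
    rw [if_neg (by omega), T_eq hp hα (by omega), if_pos (by omega),
      show r + α - α = r from by omega]
    push_cast
    ring

lemma h_odd {p α : ℕ} (hp : p.Prime) (hα : 1 ≤ α) {r : ℕ} (hr : α ≤ r + 1)
    (ho : Odd (r + α)) : h p α r = (p : ℚ) ^ ((r + α - 1) / 2) := by
  obtain ⟨k, hk⟩ := ho
  rcases Nat.eq_zero_or_pos r with h0 | h0
  · have : α = 1 := by omega
    simp [h, h0, this]
  · rw [h, if_neg (by omega), T_eq hp hα (by omega)]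
    split_ifs with hc
    · rw [show r + α - α = (r + α - 1) / 2 from by omega]
      push_cast; ring
    · rw [show (r + α) / 2 = (r + α - 1) / 2 from by omega]
      push_cast; ring

lemma h_even {p α : ℕ} (hp : p.Prime) (hα : 1 ≤ α) {r : ℕ} (hr : α ≤ r)
    (he : Even (r + α)) :
    h p α r = ((p : ℚ) ^ ((r + α) / 2) + (p : ℚ) ^ ((r + α) / 2 - 1)) / 2 := by
  obtain ⟨k, hk⟩ := he
  rw [h, if_neg (by omega), T_eq hp hα (by omega), if_neg (by omega),
    show (r + α - 1) / 2 = (r + α) / 2 - 1 from by omega]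
  push_cast; ring

/-- Fix a prime `p` and an integer `α ≥ 1`, and let `T`, `h` be as above. Then
`h(1) - 2 = (p-3)/2` if `α = 1`, and `h(1) - 2 = p - 2` if `α ≥ 2`. Moreover, for
every `r ≥ 2`, `h(r) - 2h(r-1) + h(r-2)` equals: `0` if `r ≥ α+1` and `r+α` is odd;
`(p^{(r+α)/2} - 2p^{(r+α)/2-1} + p^{(r+α)/2-2})/2` if `r ≥ α+2` and `r+α` is even;
`(p^r - 3p^{r-1} + 2p^{r-2})/2` if `r = α`; and `p^r - 2p^{r-1} + p^{r-2}` if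
`r < α`. -/
theorem beta_mul_sigmaSub_apply (p α : ℕ) (hp : p.Prime) (hα : 1 ≤ α) :
    ((α = 1 → h p α 1 - 2 = ((p : ℚ) - 3) / 2) ∧
     (2 ≤ α → h p α 1 - 2 = (p : ℚ) - 2)) ∧
    (∀ r : ℕ, 2 ≤ r →
      (α + 1 ≤ r → Odd (r + α) → h p α r - 2 * h p α (r - 1) + h p α (r - 2) = 0) ∧
      (α + 2 ≤ r → Even (r + α) →
        h p α r - 2 * h p α (r - 1) + h p α (r - 2)
          = ((p : ℚ) ^ ((r + α) / 2) - 2 * (p : ℚ) ^ ((r + α) / 2 - 1)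
              + (p : ℚ) ^ ((r + α) / 2 - 2)) / 2) ∧
      (r = α →
        h p α r - 2 * h p α (r - 1) + h p α (r - 2)
          = ((p : ℚ) ^ r - 3 * (p : ℚ) ^ (r - 1) + 2 * (p : ℚ) ^ (r - 2)) / 2) ∧
      (r < α →
        h p α r - 2 * h p α (r - 1) + h p α (r - 2)
          = (p : ℚ) ^ r - 2 * (p : ℚ) ^ (r - 1) + (p : ℚ) ^ (r - 2))) := by
  constructor
  · constructor
    · intro h1
      subst h1
      rw [h_even hp le_rfl le_rfl (by decide)]
      norm_num
      ring
    · intro h2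
      rw [h_small hp hα (by omega)]
      norm_num
  · intro r hr
    refine ⟨?_, ?_, ?_, ?_⟩
    · intro hr1 ho
      obtain ⟨k, hk⟩ := ho
      rw [h_odd hp hα (by omega) ⟨k, hk⟩]
      rw [h_even hp hα (by omega) ⟨k, by omega⟩,
        show (r - 1 + α) / 2 = (r + α - 1) / 2 from by omega,
        show (r + α - 1) / 2 - 1 = (r + α - 1) / 2 - 1 from rfl]
      rw [h_odd hp hα (by omega) ⟨k - 1, by omega⟩,
        show (r - 2 + α - 1) / 2 = (r + α - 1) / 2 - 1 from by omega]
      ring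
    · intro hr2 he
      obtain ⟨k, hk⟩ := he
      rw [h_even hp hα (by omega) ⟨k, hk⟩]
      rw [h_odd hp hα (by omega) ⟨k - 1, by omega⟩,
        show (r - 1 + α - 1) / 2 = (r + α) / 2 - 1 from by omega]
      rw [h_even hp hα (by omega) ⟨k - 1, by omega⟩,
        show (r - 2 + α) / 2 = (r + α) / 2 - 1 from by omega,
        show (r + α) / 2 - 1 - 1 = (r + α) / 2 - 2 from by omega]
      ring
    · intro hra
      subst hra
      rw [h_even hp hα le_rfl ⟨r, by omega⟩,
        show (r + r) / 2 = r from by omega]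
      rw [h_small hp hα (show r - 1 ≤ r - 1 from le_rfl),
        h_small hp hα (show r - 2 ≤ r - 1 from by omega)]
      ring
    · intro hra
      rw [h_small hp hα (by omega), h_small hp hα (by omega),
        h_small hp hα (by omega)]
end

section
/- Let N and f be positive integers with f ∣ N, and assume it is not the case that both 2 ∣ f and the 2-adic valuation of N/f equals 1. Define ψ_f(n) := ψ(f·n)/ψ(f). Then ψ(f) · (β * ψ_f)(N/f) ≥ N/ν(N), as rational numbers. -/
/-- The rational-valued arithmetic function `ψ(n) = n · ∏_{p ∣ n} (1 + 1/p)`. -/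
noncomputable def psi : ArithmeticFunction ℚ :=
  ⟨fun n => (n : ℚ) * ∏ p ∈ n.primeFactors, (1 + 1 / (p : ℚ)), by simp⟩

/-- Given a positive integer `f`, the arithmetic function `ψ_f(n) := ψ(f·n)/ψ(f)`. -/
noncomputable def psiSub (f : ℕ) : ArithmeticFunction ℚ :=
  ⟨fun n => psi (f * n) / psi f, by simp⟩

lemma psi_apply (n : ℕ) : psi n = (n : ℚ) * ∏ p ∈ n.primeFactors, (1 + 1 / (p : ℚ)) := rfl

lemma psi_pos {n : ℕ} (hn : 0 < n) : 0 < psi n := by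
  rw [psi_apply]
  apply mul_pos (by exact_mod_cast hn)
  apply Finset.prod_pos
  intro p hp
  have h1 := (Nat.prime_of_mem_primeFactors hp).pos
  positivity

lemma psi_mult : psi.IsMultiplicative := by
  constructor
  · simp [psi_apply]
  · intro m n hmn
    rcases eq_or_ne m 0 with rfl | hm
    · simp [psi_apply]
    rcases eq_or_ne n 0 with rfl | hn
    · simp [psi_apply]
    rw [psi_apply, psi_apply, psi_apply, Nat.primeFactors_mul hm hn,
      Finset.prod_union hmn.disjoint_primeFactors, Nat.cast_mul]
    ring

lemma psi_prime_pow {p : ℕ} (hp : p.Prime) {k : ℕ} (hk : k ≠ 0) :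
    psi (p ^ k) = (p : ℚ) ^ k * (1 + 1 / (p : ℚ)) := by
  rw [psi_apply, Nat.primeFactors_prime_pow hk hp, Finset.prod_singleton, Nat.cast_pow]

lemma psi_prime_pow' {p : ℕ} (hp : p.Prime) (k : ℕ) :
    psi (p ^ (k + 1)) = (p : ℚ) ^ k * ((p : ℚ) + 1) := by
  have hq : (0:ℚ) < p := by exact_mod_cast hp.pos
  rw [psi_prime_pow hp (Nat.succ_ne_zero k), pow_succ]
  field_simp

lemma psi_pow_ge {p : ℕ} (hp : p.Prime) (k : ℕ) : (p : ℚ) ^ k ≤ psi (p ^ k) := by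
  rcases Nat.eq_zero_or_pos k with rfl | hk
  · simp [psi_apply]
  · rw [psi_prime_pow hp hk.ne']
    have hq : (0:ℚ) < p := by exact_mod_cast hp.pos
    nlinarith [pow_pos hq k, one_div_pos.2 hq]

lemma psi_mul_pow_of_dvd {f p : ℕ} (hf : 0 < f) (hp : p.Prime) (hpf : p ∣ f) (k : ℕ) :
    psi (f * p ^ k) = (p : ℚ) ^ k * psi f := by
  rcases Nat.eq_zero_or_pos k with rfl | hk
  · simp
  have h1 : (f * p ^ k).primeFactors = f.primeFactors := by
    rw [Nat.primeFactors_mul hf.ne' (pow_ne_zero _ hp.pos.ne'),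
      Nat.primeFactors_prime_pow hk.ne' hp, Finset.union_eq_left]
    simp only [Finset.singleton_subset_iff]
    exact Nat.mem_primeFactors.2 ⟨hp, hpf, hf.ne'⟩
  rw [psi_apply, psi_apply, h1, Nat.cast_mul, Nat.cast_pow]
  ring

lemma psiSub_apply (f n : ℕ) : psiSub f n = psi (f * n) / psi f := rfl

lemma psiSub_mult {f : ℕ} (hf : 0 < f) : (psiSub f).IsMultiplicative := by
  have hψf := (psi_pos hf).ne'
  constructor
  · simp [psiSub_apply, div_self hψf]
  · intro m n hmn
    rcases eq_or_ne m 0 with rfl | hm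
    · simp [psiSub_apply, psi_apply]
    rcases eq_or_ne n 0 with rfl | hn
    · simp [psiSub_apply, psi_apply]
    have key : psi (f * (m * n)) * psi f = psi (f * m) * psi (f * n) := by
      have hu : (f * m).primeFactors ∪ (f * n).primeFactors = (f * (m * n)).primeFactors := by
        rw [Nat.primeFactors_mul hf.ne' hm, Nat.primeFactors_mul hf.ne' hn,
          Nat.primeFactors_mul hf.ne' (mul_ne_zero hm hn), Nat.primeFactors_mul hm hn]
        ext x; simp; tauto
      have hi : (f * m).primeFactors ∩ (f * n).primeFactors = f.primeFactors := by
        rw [Nat.primeFactors_mul hf.ne' hm, Nat.primeFactors_mul hf.ne' hn]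
        have hd := hmn.disjoint_primeFactors
        rw [Finset.disjoint_left] at hd
        ext x
        simp only [Finset.mem_inter, Finset.mem_union]
        constructor
        · rintro ⟨h1 | h1, h2 | h2⟩ <;> first | exact h1 | exact h2 | exact absurd h2 (hd h1)
        · tauto
      have hpu := Finset.prod_union_inter (s₁ := (f * m).primeFactors)
        (s₂ := (f * n).primeFactors) (f := fun p => 1 + 1 / (p : ℚ))
      rw [hu, hi] at hpu
      rw [psi_apply, psi_apply, psi_apply, psi_apply]
      push_cast
      linear_combination ((f : ℚ) * m * n * f) * hpu
    rw [psiSub_apply, psiSub_apply, psiSub_apply, div_mul_div_comm,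
      div_eq_div_iff hψf (mul_ne_zero hψf hψf)]
    linear_combination psi f * key

lemma psiSub_pow_of_dvd {f p : ℕ} (hf : 0 < f) (hp : p.Prime) (hpf : p ∣ f) (k : ℕ) :
    psiSub f (p ^ k) = (p : ℚ) ^ k := by
  rw [psiSub_apply, psi_mul_pow_of_dvd hf hp hpf, mul_div_assoc, div_self (psi_pos hf).ne',
    mul_one]

lemma psiSub_pow_of_not_dvd {f p : ℕ} (hf : 0 < f) (hp : p.Prime) (hpf : ¬ p ∣ f) (k : ℕ) :
    psiSub f (p ^ k) = psi (p ^ k) := by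
  rw [psiSub_apply, psi_mult.2 (((hp.coprime_iff_not_dvd).2 hpf).symm.pow_right k), mul_comm,
    mul_div_assoc, div_self (psi_pos hf).ne', mul_one]

lemma conv_prime_pow (β g : ArithmeticFunction ℚ) {p : ℕ} (hp : p.Prime) (c : ℕ) :
    (β * g) (p ^ c) = ∑ i ∈ Finset.range (c + 1), β (p ^ i) * g (p ^ (c - i)) := by
  rw [ArithmeticFunction.mul_apply, Nat.sum_divisorsAntidiagonal (f := fun d e => β d * g e),
    Nat.sum_divisors_prime_pow hp]
  refine Finset.sum_congr rfl fun i hi => ?_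
  have hic : i ≤ c := by have := Finset.mem_range.1 hi; omega
  rw [Nat.pow_div hic hp.pos]

lemma local_ineq (β ν : ArithmeticFunction ℚ)
    (hβ : β.IsMultiplicative)
    (hβ1 : ∀ p : ℕ, p.Prime → β p = -2)
    (hβ2 : ∀ p : ℕ, p.Prime → β (p ^ 2) = 1)
    (hβ3 : ∀ p r : ℕ, p.Prime → 3 ≤ r → β (p ^ r) = 0)
    (hν2 : ∀ r : ℕ, 1 ≤ r → ν (2 ^ r) = 4)
    (hνp : ∀ p r : ℕ, p.Prime → p ≠ 2 → 1 ≤ r → ν (p ^ r) = 1 + 2 / ((p : ℚ) - 2))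
    {f p : ℕ} (hf : 0 < f) (hp : p.Prime) (b c : ℕ)
    (hb : p ∣ f ↔ 0 < b) (hbc : 0 < b + c)
    (hexc : ¬ (p = 2 ∧ 0 < b ∧ c = 1)) :
    (p : ℚ) ^ (b + c) / ν (p ^ (b + c)) ≤ psi (p ^ b) * (β * psiSub f) (p ^ c) := by
  have hq0 : (0 : ℚ) < p := by exact_mod_cast hp.pos
  have hmul := hβ.mul (psiSub_mult hf)
  have hψf1 : psiSub f 1 = 1 := (psiSub_mult hf).1
  -- rewrite the ν side
  have hνred : ∀ G : ℚ, ((p = 2 → (p:ℚ) ^ (b+c) / 4 ≤ G) ∧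
      (p ≠ 2 → (p:ℚ) ^ (b+c) * ((p:ℚ) - 2) ≤ G * p)) →
      (p : ℚ) ^ (b + c) / ν (p ^ (b + c)) ≤ G := by
    intro G hG
    by_cases hp2 : p = 2
    · subst hp2; rw [hν2 (b+c) hbc]; exact hG.1 rfl
    · have hq3 : (3 : ℚ) ≤ p := by
        have h2 := hp.two_le
        have : 3 ≤ p := by rcases Nat.lt_or_ge p 3 with h | h; · interval_cases p <;> simp_all
                           · exact h
        exact_mod_cast this
      rw [hνp p (b+c) hp hp2 hbc]
      have hne : (p:ℚ) - 2 ≠ 0 := by linarith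
      have hd : 1 + 2 / ((p:ℚ) - 2) = (p:ℚ) / ((p:ℚ) - 2) := by
        field_simp
        ring
      rw [hd, div_div_eq_mul_div, div_le_iff₀ hq0]
      exact hG.2 hp2
  have hq3' : p ≠ 2 → (3:ℚ) ≤ p := by
    intro hp2
    have h2 := hp.two_le
    have h3 : 3 ≤ p := by omega
    exact_mod_cast h3
  rcases Nat.lt_or_ge c 2 with hc2 | hc2
  · interval_cases c
    · -- c = 0
      obtain ⟨j, rfl⟩ : ∃ j, b = j + 1 := ⟨b - 1, by omega⟩
      have hconv : (β * psiSub f) (p ^ 0) = 1 := by rw [pow_zero]; exact hmul.1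
      rw [hconv, mul_one, psi_prime_pow' hp j]
      refine hνred _ ⟨?_, ?_⟩
      · rintro rfl
        push_cast
        have hJ : (0:ℚ) < 2 ^ j := by positivity
        rw [Nat.add_zero, pow_succ, div_le_iff₀ (by norm_num : (0:ℚ) < 4)]
        nlinarith
      · intro hp2
        have hq3 := hq3' hp2
        have hJ := pow_pos hq0 j
        rw [Nat.add_zero, pow_succ]
        nlinarith
    · -- c = 1
      have hconv : (β * psiSub f) (p ^ 1) = psiSub f (p ^ 1) - 2 := by
        rw [conv_prime_pow β _ hp, Finset.sum_range_succ, Finset.sum_range_succ,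
          Finset.sum_range_zero]
        norm_num [hβ.1, hβ1 p hp, hψf1]
        ring
      rcases Nat.eq_zero_or_pos b with rfl | hbpos
      · have hnd : ¬ p ∣ f := fun h => absurd (hb.1 h) (lt_irrefl 0)
        rw [hconv, psiSub_pow_of_not_dvd hf hp hnd, pow_zero, psi_mult.1, one_mul]
        have hpsip1 : psi (p ^ 1) = (p:ℚ) + 1 := by
          rw [pow_one]; simpa using psi_prime_pow' hp 0
        rw [hpsip1]
        refine hνred _ ⟨?_, ?_⟩
        · rintro rfl; norm_num
        · intro hp2
          have hq3 := hq3' hp2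
          rw [Nat.zero_add, pow_one]
          nlinarith
      · obtain ⟨j, rfl⟩ : ∃ j, b = j + 1 := ⟨b - 1, by omega⟩
        have hp2 : p ≠ 2 := fun h => hexc ⟨h, by omega, rfl⟩
        have hpf : p ∣ f := hb.2 hbpos
        rw [hconv, psiSub_pow_of_dvd hf hp hpf, pow_one, psi_prime_pow' hp j]
        refine hνred _ ⟨fun h => absurd h hp2, ?_⟩
        intro _
        have hq3 := hq3' hp2
        have hJ := pow_pos hq0 j
        simp only [pow_succ]
        nlinarith [mul_nonneg (mul_pos hJ hq0).le (by linarith : (0:ℚ) ≤ (p:ℚ) - 2)]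
  · -- c ≥ 2
    obtain ⟨k, rfl⟩ : ∃ k, c = k + 2 := ⟨c - 2, by omega⟩
    have hred : (β * psiSub f) (p ^ (k + 2)) =
        psiSub f (p ^ (k + 2)) - 2 * psiSub f (p ^ (k + 1)) + psiSub f (p ^ k) := by
      rw [conv_prime_pow β _ hp,
        ← Finset.sum_subset (Finset.range_subset_range.2 (by omega : 3 ≤ k + 2 + 1))
          (fun i hi hni => by
            rw [hβ3 p i hp (by simpa using hni), zero_mul]),
        Finset.sum_range_succ, Finset.sum_range_succ, Finset.sum_range_succ,
        Finset.sum_range_zero]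
      norm_num [hβ.1, hβ1 p hp, hβ2 p hp]
      ring
    rcases Nat.eq_zero_or_pos b with rfl | hbpos
    · have hnd : ¬ p ∣ f := fun h => absurd (hb.1 h) (lt_irrefl 0)
      have hpk := psi_pow_ge hp k
      rw [hred, psiSub_pow_of_not_dvd hf hp hnd, psiSub_pow_of_not_dvd hf hp hnd,
        psiSub_pow_of_not_dvd hf hp hnd, pow_zero, psi_mult.1, one_mul,
        psi_prime_pow' hp (k + 1), psi_prime_pow' hp k]
      refine hνred _ ⟨?_, ?_⟩
      · rintro rfl
        push_cast at hpk ⊢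
        have hK : (0:ℚ) < 2 ^ k := by positivity
        rw [Nat.zero_add, div_le_iff₀ (by norm_num : (0:ℚ) < 4)]
        simp only [pow_succ, pow_add]
        nlinarith
      · intro hp2
        have hq3 := hq3' hp2
        have hK := pow_pos hq0 k
        rw [Nat.zero_add]
        simp only [pow_succ, pow_add]
        nlinarith [mul_le_mul_of_nonneg_right hpk hq0.le,
          mul_nonneg (mul_pos hK hq0).le (by linarith : (0:ℚ) ≤ (p:ℚ) - 1)]
    · obtain ⟨j, rfl⟩ : ∃ j, b = j + 1 := ⟨b - 1, by omega⟩
      have hpf : p ∣ f := hb.2 hbpos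
      rw [hred, psiSub_pow_of_dvd hf hp hpf, psiSub_pow_of_dvd hf hp hpf,
        psiSub_pow_of_dvd hf hp hpf, psi_prime_pow' hp j]
      refine hνred _ ⟨?_, ?_⟩
      · rintro rfl
        push_cast
        have hJ : (0:ℚ) < 2 ^ j := by positivity
        have hK : (0:ℚ) < 2 ^ k := by positivity
        rw [div_le_iff₀ (by norm_num : (0:ℚ) < 4)]
        simp only [pow_succ, pow_add]
        nlinarith [mul_pos hJ hK]
      · intro hp2
        have hq3 := hq3' hp2
        have hJ := pow_pos hq0 j
        have hK := pow_pos hq0 k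
        simp only [pow_succ, pow_add]
        nlinarith [mul_pos hJ hK, sq_nonneg ((p:ℚ) - 1),
          mul_nonneg (mul_pos hJ hK).le (sq_nonneg ((p:ℚ) - 1))]


/-- Let `β` be the multiplicative arithmetic function with `β(p) = -2`, `β(p^2) = 1`
and `β(p^r) = 0` for `r ≥ 3`, and let `ν` be the multiplicative arithmetic function
with `ν(2^r) = 4` and `ν(p^r) = 1 + 2/(p-2)` for odd primes `p` (and all `r ≥ 1`).
Let `N` and `f` be positive integers with `f ∣ N`, and assume it is not the case that
both `2 ∣ f` and `v₂(N/f) = 1`. Then `ψ(f) · (β * ψ_f)(N/f) ≥ N/ν(N)` as rational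
numbers, where `ψ_f(n) := ψ(f·n)/ψ(f)`. -/
theorem psi_mul_beta_mul_psiSub_ge (β ν : ArithmeticFunction ℚ)
    (hβ : β.IsMultiplicative)
    (hβ1 : ∀ p : ℕ, p.Prime → β p = -2)
    (hβ2 : ∀ p : ℕ, p.Prime → β (p ^ 2) = 1)
    (hβ3 : ∀ p r : ℕ, p.Prime → 3 ≤ r → β (p ^ r) = 0)
    (hν : ν.IsMultiplicative)
    (hν2 : ∀ r : ℕ, 1 ≤ r → ν (2 ^ r) = 4)
    (hνp : ∀ p r : ℕ, p.Prime → p ≠ 2 → 1 ≤ r → ν (p ^ r) = 1 + 2 / ((p : ℚ) - 2))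
    (N f : ℕ) (hN : 0 < N) (hf : 0 < f) (hfN : f ∣ N)
    (hexc : ¬ (2 ∣ f ∧ (N / f).factorization 2 = 1)) :
    (N : ℚ) / ν N ≤ psi f * (β * psiSub f) (N / f) := by
  have hmul := hβ.mul (psiSub_mult hf)
  set m := N / f with hm
  have hm0 : 0 < m := Nat.div_pos (Nat.le_of_dvd hN hfN) hf
  have hNfm : f * m = N := Nat.mul_div_cancel' hfN
  have hfact : ∀ p : ℕ, N.factorization p = f.factorization p + m.factorization p := by
    intro p
    rw [← hNfm, Nat.factorization_mul hf.ne' hm0.ne']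
    rfl
  have h1 : (N : ℚ) = ∏ p ∈ N.primeFactors, (p : ℚ) ^ N.factorization p := by
    conv_lhs => rw [← Nat.factorization_prod_pow_eq_self hN.ne']
    rw [Finsupp.prod, Nat.support_factorization]
    push_cast
    rfl
  have h2 : ν N = ∏ p ∈ N.primeFactors, ν (p ^ N.factorization p) := by
    rw [ArithmeticFunction.IsMultiplicative.multiplicative_factorization ν hν hN.ne',
      Finsupp.prod, Nat.support_factorization]
  have hzero : ∀ {n : ℕ}, n ∣ N → ∀ p ∈ N.primeFactors, p ∉ n.primeFactors →
      n.factorization p = 0 := by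
    intro n hn p _ hpn
    exact Finsupp.notMem_support_iff.1 (by rwa [Nat.support_factorization])
  have h3 : psi f = ∏ p ∈ N.primeFactors, psi (p ^ f.factorization p) := by
    rw [ArithmeticFunction.IsMultiplicative.multiplicative_factorization psi psi_mult hf.ne',
      Finsupp.prod, Nat.support_factorization]
    refine Finset.prod_subset (Nat.primeFactors_mono hfN hN.ne') ?_
    intro p hpN hpf
    rw [hzero hfN p hpN hpf, pow_zero]
    exact psi_mult.1
  have hmN : m ∣ N := Nat.div_dvd_of_dvd hfN
  have h4 : (β * psiSub f) m = ∏ p ∈ N.primeFactors, (β * psiSub f) (p ^ m.factorization p) := by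
    rw [ArithmeticFunction.IsMultiplicative.multiplicative_factorization _ hmul hm0.ne',
      Finsupp.prod, Nat.support_factorization]
    refine Finset.prod_subset (Nat.primeFactors_mono hmN hN.ne') ?_
    intro p hpN hpm
    rw [hzero hmN p hpN hpm, pow_zero]
    exact hmul.1
  rw [h1, h2, h3, h4, ← Finset.prod_div_distrib, ← Finset.prod_mul_distrib]
  apply Finset.prod_le_prod
  · intro p hpP
    have hp := Nat.prime_of_mem_primeFactors hpP
    have ha : 1 ≤ N.factorization p :=
      (hp.dvd_iff_one_le_factorization hN.ne').1 (Nat.dvd_of_mem_primeFactors hpP)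
    apply div_nonneg (by positivity)
    by_cases hp2 : p = 2
    · subst hp2; rw [hν2 _ ha]; norm_num
    · rw [hνp p _ hp hp2 ha]
      have hq3 : (3 : ℚ) ≤ p := by
        have h2' := hp.two_le
        have h3' : 3 ≤ p := by omega
        exact_mod_cast h3'
      have hpos : (0 : ℚ) < (p : ℚ) - 2 := by linarith
      positivity
  · intro p hpP
    have hp := Nat.prime_of_mem_primeFactors hpP
    have ha : 1 ≤ N.factorization p :=
      (hp.dvd_iff_one_le_factorization hN.ne').1 (Nat.dvd_of_mem_primeFactors hpP)
    have hab := hfact p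
    rw [hab]
    refine local_ineq β ν hβ hβ1 hβ2 hβ3 hν2 hνp hf hp _ _
      (hp.dvd_iff_one_le_factorization hf.ne') (by omega) ?_
    rintro ⟨rfl, hb', hc'⟩
    exact hexc ⟨(hp.dvd_iff_one_le_factorization hf.ne').2 hb', hc'⟩
end
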